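/- Let n ≥ 3, let z_1, …, z_{n−1} be complex numbers, and for 1 ≤ i ≤ n−1 let N_i ∈ ℂ^n be the vector with (N_i)_1 = (N_i)_{i+1} = 1 and (N_i)_j = −2/(n−2) for all j ∉ {1, i+1}. Then (Σ_{k=1}^{n−1} z_k·P_k)·(Σ_{i=1}^{n−1} N_i) = (Σ_{k=1}^{n−1} P_k)·(Σ_{i=1}^{n−1} z_i·N_i). -/

import Mathlib

open Matrix

/-- The n×n complex permutation matrix of the transposition (a b). -/
noncomputable def permP (n : ℕ) (a b : Fin n) : Matrix (Fin n) (Fin n) ℂ :=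
  Matrix.of fun i j => if i = Equiv.swap a b j then 1 else 0

/-- P_k = P(1,k+1) for 1 ≤ k ≤ n-1: with 0-based indices, the transposition (0, k+1). -/
noncomputable def Pk (n : ℕ) [NeZero n] (k : Fin (n - 1)) : Matrix (Fin n) (Fin n) ℂ :=
  permP n 0 ⟨k.1 + 1, by have := k.2; omega⟩

/-- N_i : entries 1 at positions 1 and i+1 (1-based), and -2/(n-2) elsewhere. -/
noncomputable def Nvec (n : ℕ) (i : Fin (n - 1)) : Fin n → ℂ :=
  fun j => if j.1 = 0 ∨ j.1 = i.1 + 1 then 1 else -2 / ((n : ℂ) - 2)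

lemma permP_mulVec (n : ℕ) (a b : Fin n) (v : Fin n → ℂ) :
    permP n a b *ᵥ v = fun i => v (Equiv.swap a b i) := by
  ext i
  simp only [permP, mulVec, dotProduct, Matrix.of_apply]
  have : ∀ j : Fin n, (i = Equiv.swap a b j) ↔ (j = Equiv.swap a b i) := by
    intro j
    constructor
    · intro h; rw [h, Equiv.swap_apply_self]
    · intro h; rw [h, Equiv.swap_apply_self]
  simp only [this]
  simp

lemma Pk_mulVec (n : ℕ) [NeZero n] (k : Fin (n - 1)) (v : Fin n → ℂ) :
    Pk n k *ᵥ v = fun i => v (Equiv.swap 0 ⟨k.1 + 1, by have := k.2; omega⟩ i) := by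
  simp [Pk, permP_mulVec]

lemma sum_mulVec' {m : ℕ} (s : Finset (Fin m)) (M : Fin m → Matrix (Fin n) (Fin n) ℂ)
    (v : Fin n → ℂ) : (∑ k ∈ s, M k) *ᵥ v = ∑ k ∈ s, M k *ᵥ v := by
  ext j
  simp only [mulVec, dotProduct, Finset.sum_apply, Matrix.sum_apply, Finset.sum_mul]
  exact Finset.sum_comm

lemma key (n : ℕ) [NeZero n] (k i : Fin (n - 1)) (j : Fin n) :
    Nvec n i (Equiv.swap 0 ⟨k.1 + 1, by have := k.2; omega⟩ j)
      = Nvec n k (Equiv.swap 0 ⟨i.1 + 1, by have := i.2; omega⟩ j) := by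
  simp only [Nvec, Equiv.swap_apply_def]
  split_ifs <;> simp only [Fin.ext_iff, Fin.val_zero, false_or, true_or, not_true_eq_false] at * <;> omega

/-- (Σ_k z_k·P_k)·(Σ_i N_i) = (Σ_k P_k)·(Σ_i z_i·N_i). -/
theorem weighted_Pk_Nvec (n : ℕ) [NeZero n] (hn : 3 ≤ n) (z : Fin (n - 1) → ℂ) :
    (∑ k : Fin (n - 1), z k • Pk n k) *ᵥ (∑ i : Fin (n - 1), Nvec n i)
      = (∑ k : Fin (n - 1), Pk n k) *ᵥ (∑ i : Fin (n - 1), z i • Nvec n i) := by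
  ext j
  rw [sum_mulVec', sum_mulVec']
  simp only [Matrix.smul_mulVec, Pk_mulVec, Finset.sum_apply, Pi.smul_apply,
    smul_eq_mul, Finset.mul_sum]
  calc ∑ k : Fin (n-1), ∑ i : Fin (n-1),
        z k * Nvec n i (Equiv.swap 0 ⟨k.1 + 1, by have := k.2; omega⟩ j)
      = ∑ k : Fin (n-1), ∑ i : Fin (n-1),
        z k * Nvec n k (Equiv.swap 0 ⟨i.1 + 1, by have := i.2; omega⟩ j) := by
        refine Finset.sum_congr rfl fun k _ => Finset.sum_congr rfl fun i _ => ?_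
        rw [key]
    _ = ∑ i : Fin (n-1), ∑ k : Fin (n-1),
        z k * Nvec n k (Equiv.swap 0 ⟨i.1 + 1, by have := i.2; omega⟩ j) :=
        Finset.sum_comm
    _ = _ := by
        refine Finset.sum_congr rfl fun i _ => Finset.sum_congr rfl fun k _ => ?_
        simp [Pi.smul_apply]
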